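/- Let C be a chain complex as in the context and let h ∈ H^i(C) be a torsion cohomology class. Then h ≠ 0 if and only if there exist an integer n ≥ 2, a chain c ∈ C_i, and a cocycle φ ∈ C^i representing h such that ∂c ∈ n·C_{i−1} and φ(c) is not divisible by n. -/
import Mathlib


/-- A chain complex of abelian groups in nonnegative degrees such that each chain group
is a free ℤ-module on a finite basis: the degree-`i` chain group is `ι i → ℤ`, the free
ℤ-module on the finite type `ι i`. -/
structure FreeChainComplex where
  ι : ℕ → Type
  fin : ∀ i, Fintype (ι i)
  bd : ∀ i, ((ι (i + 1) → ℤ) →+ (ι i → ℤ))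
  bd_bd : ∀ i (x : ι (i + 2) → ℤ), bd i (bd (i + 1) x) = 0

namespace FreeChainComplex

variable (X : FreeChainComplex)

/-- degree-`i` chains -/
abbrev Chain (i : ℕ) := X.ι i → ℤ

/-- degree-`i` integral cochains: `C^i = Hom(C_i, ℤ)` -/
abbrev Cochain (i : ℕ) := (X.ι i → ℤ) →+ ℤ

/-- the boundary map out of degree `i` (the zero map in degree `0`,
since the complex lives in nonnegative degrees). -/
def bdFrom : ∀ i : ℕ, ((X.ι i → ℤ) →+ (X.ι (i - 1) → ℤ))
  | 0 => 0
  | (j + 1) => X.bd j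

/-- the coboundary `δφ = φ ∘ ∂` -/
def cb (i : ℕ) : X.Cochain i →+ X.Cochain (i + 1) where
  toFun φ := φ.comp (X.bd i)
  map_zero' := by ext x; simp
  map_add' _ _ := by ext x; simp

/-- degree-`i` cocycles -/
def cocycles (i : ℕ) : AddSubgroup (X.Cochain i) := (X.cb i).ker

/-- degree-`i` coboundaries (there are none in degree 0) -/
def cobds : ∀ i : ℕ, AddSubgroup (X.Cochain i)
  | 0 => ⊥
  | (j + 1) => (X.cb j).range

/-- the `i`-th integral cohomology of the cochain complex `Hom(C, ℤ)` -/
abbrev H (i : ℕ) := X.cocycles i ⧸ (X.cobds i).addSubgroupOf (X.cocycles i)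

/-- the cohomology class of a cocycle -/
def cls (i : ℕ) (φ : X.Cochain i) (h : φ ∈ X.cocycles i) : X.H i :=
  QuotientAddGroup.mk ⟨φ, h⟩

end FreeChainComplex

lemma extend_from_submodule {κ : Type} [Fintype κ]
    (W : Submodule ℤ (κ → ℤ)) (f : W →ₗ[ℤ] ℤ)
    (compat : ∀ n : ℕ, 2 ≤ n → ∀ w : W,
      (∃ b : κ → ℤ, (w : κ → ℤ) = (n : ℤ) • b) → (n : ℤ) ∣ f w) :
    ∃ g : (κ → ℤ) →ₗ[ℤ] ℤ, ∀ w : W, g w = f w := by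
  classical
  obtain ⟨n, bM, bW, e, a, ha⟩ := Submodule.smithNormalForm (Pi.basisFun ℤ κ) W
  have hane : ∀ j, a j ≠ 0 := by
    intro j hj
    apply bW.ne_zero j
    have h0 : (bW j : κ → ℤ) = 0 := by rw [ha j, hj, zero_smul]
    exact Subtype.ext h0
  have hdvd : ∀ j, a j ∣ f (bW j) := by
    intro j
    rcases Nat.lt_or_ge (a j).natAbs 2 with hlt | hge
    · have h1 : (a j).natAbs = 1 := by
        have := Int.natAbs_eq_zero.not.2 (hane j)
        omega
      exact (Int.isUnit_iff.2 (by simpa using Int.natAbs_eq_iff.1 h1)).dvd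
    · have hcv := compat (a j).natAbs hge (bW j) ?_
      · exact Int.natAbs_dvd.1 hcv
      · rcases Int.natAbs_eq (a j) with he | he
        · exact ⟨bM (e j), by rw [ha j, ← he]⟩
        · exact ⟨-(bM (e j)), by rw [ha j, smul_neg, ← neg_smul, ← he]⟩
  choose q hq using hdvd
  set v : κ → ℤ := fun i => if h : ∃ j, e j = i then q h.choose else 0 with hv
  set g : (κ → ℤ) →ₗ[ℤ] ℤ := bM.constr ℤ v with hg
  have hgej : ∀ j, g (bM (e j)) = q j := by
    intro j
    rw [hg, Module.Basis.constr_basis, hv]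
    have hex : ∃ j', e j' = e j := ⟨j, rfl⟩
    show (if h : ∃ j', e j' = e j then q h.choose else 0) = q j
    rw [dif_pos hex]
    have : hex.choose = j := e.injective hex.choose_spec
    rw [this]
  refine ⟨g, ?_⟩
  have hcomp : g ∘ₗ W.subtype = f := by
    apply bW.ext
    intro j
    rw [LinearMap.comp_apply, Submodule.subtype_apply, ha j, map_smul, hgej j, hq j,
      smul_eq_mul]
  intro w
  exact DFunLike.congr_fun hcomp w


/-- **Certificate for a non-trivial torsion cohomology class.**
Let `C` be a chain complex of finitely generated free abelian groups in nonnegative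
degrees and let `h ∈ H^i(C)` be a torsion cohomology class.  Then `h ≠ 0` if and only if
there exist an integer `n ≥ 2`, a chain `c ∈ C_i`, and a cocycle `φ ∈ C^i` representing
`h` such that `∂c ∈ n·C_{i−1}` and `φ(c)` is not divisible by `n`. -/
theorem certificate_for_nontrivial_torsion_class
    (X : FreeChainComplex) (i : ℕ) (h : X.H i)
    (htor : ∃ k : ℕ, 1 ≤ k ∧ k • h = 0) :
    h ≠ 0 ↔
      ∃ n : ℕ, 2 ≤ n ∧
        ∃ (c : X.Chain i) (φ : X.Cochain i) (hφ : φ ∈ X.cocycles i),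
          X.cls i φ hφ = h ∧
          (∃ c' : X.Chain (i - 1), X.bdFrom i c = (n : ℤ) • c') ∧
          ¬ ((n : ℤ) ∣ φ c) := by
  constructor
  · intro hne
    obtain ⟨k, hk1, hkh⟩ := htor
    obtain ⟨⟨φ, hφ⟩, rfl⟩ := QuotientAddGroup.mk_surjective h
    have hx : ((QuotientAddGroup.mk (k • (⟨φ, hφ⟩ : X.cocycles i))) : X.H i) = 0 := by
      have h1 : (QuotientAddGroup.mk (k • (⟨φ, hφ⟩ : X.cocycles i)) : X.H i)
          = k • (QuotientAddGroup.mk ⟨φ, hφ⟩ : X.H i) :=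
        map_nsmul (QuotientAddGroup.mk' _) _ _
      rw [h1]; exact hkh
    have hmem : (k • φ) ∈ X.cobds i :=
      (AddSubgroup.mem_addSubgroupOf).1 ((QuotientAddGroup.eq_zero_iff _).1 hx)
    cases i with
    | zero =>
      exfalso
      have hb : k • φ ∈ (⊥ : AddSubgroup (X.Cochain 0)) := hmem
      have hk0 : k • φ = 0 := by simpa using hb
      have hφ0 : φ = 0 := by
        ext x
        have := DFunLike.congr_fun hk0 x
        simp only [AddMonoidHom.nsmul_apply, AddMonoidHom.zero_apply] at this ⊢
        have hkz : (k : ℤ) ≠ 0 := Int.natCast_ne_zero.2 (by omega)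
        have : (k : ℤ) * φ x = 0 := by rw [← this]; simp [nsmul_eq_mul]
        exact (mul_eq_zero.1 this).resolve_left hkz
      apply hne
      rw [QuotientAddGroup.eq_zero_iff]
      rw [AddSubgroup.mem_addSubgroupOf]
      show φ ∈ (⊥ : AddSubgroup (X.Cochain 0))
      simp [hφ0]
    | succ j =>
      obtain ⟨ψ, hψ⟩ : ∃ ψ, X.cb j ψ = k • φ := hmem
      by_contra hcert
      push_neg at hcert
      letI := X.fin j
      letI := X.fin (j + 1)
      set D : (X.ι (j+1) → ℤ) →ₗ[ℤ] (X.ι j → ℤ) := (X.bd j).toIntLinearMap with hD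
      set φℓ : (X.ι (j+1) → ℤ) →ₗ[ℤ] ℤ := φ.toIntLinearMap with hφℓ
      have hkz : (k : ℤ) ≠ 0 := Int.natCast_ne_zero.2 (by omega)
      have hker : LinearMap.ker D ≤ LinearMap.ker φℓ := by
        intro x hx
        have h1 := DFunLike.congr_fun hψ x
        have hx0 : X.bd j x = 0 := hx
        have h2 : ψ (X.bd j x) = k • φ x := h1
        rw [hx0, map_zero] at h2
        have h3 : (k : ℤ) * φ x = 0 := by rw [← nsmul_eq_mul, ← h2]
        exact LinearMap.mem_ker.2 ((mul_eq_zero.1 h3).resolve_left hkz)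
      set W := LinearMap.range D with hW
      set fW : W →ₗ[ℤ] ℤ :=
        (Submodule.liftQ (LinearMap.ker D) φℓ hker) ∘ₗ
          (D.quotKerEquivRange.symm : W →ₗ[ℤ] _) with hfWdef
      have hfW : ∀ x : X.Chain (j+1),
          fW ⟨D x, LinearMap.mem_range_self D x⟩ = φ x := by
        intro x
        rw [hfWdef, LinearMap.comp_apply]
        have : (D.quotKerEquivRange.symm : W →ₗ[ℤ] _) ⟨D x, LinearMap.mem_range_self D x⟩
            = (LinearMap.ker D).mkQ x := LinearMap.quotKerEquivRange_symm_apply_image D x _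
        rw [this, Submodule.mkQ_apply, Submodule.liftQ_apply]
        rfl
      have compat : ∀ n : ℕ, 2 ≤ n → ∀ w : W,
          (∃ b : X.ι j → ℤ, (w : X.ι j → ℤ) = (n : ℤ) • b) → (n : ℤ) ∣ fW w := by
        intro n hn w hb
        obtain ⟨b, hb⟩ := hb
        obtain ⟨c, hc⟩ := w.2
        have hbd : X.bdFrom (j+1) c = (n : ℤ) • b := by
          show X.bd j c = (n : ℤ) • b
          rw [show X.bd j c = (w : X.ι j → ℤ) from hc, hb]
        have hdv := hcert n hn c φ hφ rfl ⟨b, hbd⟩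
        have hweq : w = ⟨D c, LinearMap.mem_range_self D c⟩ := Subtype.ext hc.symm
        rw [hweq, hfW c]
        exact hdv
      obtain ⟨g, hg⟩ := extend_from_submodule W fW compat
      apply hne
      rw [QuotientAddGroup.eq_zero_iff, AddSubgroup.mem_addSubgroupOf]
      show φ ∈ (X.cb j).range
      refine ⟨g.toAddMonoidHom, ?_⟩
      ext x
      show g (X.bd j x) = φ x
      have h1 : g (D x) = fW ⟨D x, LinearMap.mem_range_self D x⟩ :=
        hg ⟨D x, LinearMap.mem_range_self D x⟩
      rw [show X.bd j x = D x from rfl, h1, hfW x]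
  · rintro ⟨n, hn, c, φ, hφ, hcls, ⟨c', hc'⟩, hndvd⟩ h0
    rw [h0] at hcls
    have hmem : φ ∈ X.cobds i :=
      (AddSubgroup.mem_addSubgroupOf).1 ((QuotientAddGroup.eq_zero_iff _).1 hcls)
    cases i with
    | zero =>
      have hb : φ ∈ (⊥ : AddSubgroup (X.Cochain 0)) := hmem
      have : φ = 0 := by simpa using hb
      apply hndvd
      rw [this]
      simp
    | succ j =>
      obtain ⟨ψ, hψ⟩ : ∃ ψ, X.cb j ψ = φ := hmem
      apply hndvd
      have h1 : φ c = ψ (X.bd j c) := by rw [← hψ]; rfl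
      have h2 : X.bd j c = (n : ℤ) • c' := hc'
      rw [h1, h2, map_zsmul, zsmul_eq_mul]
      exact Dvd.intro _ rfl
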